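/- Let A be an n×n copositive matrix, let u be a zero of A with support I = Supp(u) of cardinality k, and set K = ℝ₊^k ∩ ker(A_I). Let v ∈ ℝ^n be a nonzero vector with Supp(v) ⊆ I. Then v is a zero of A if and only if the subvector v_I lies in K. -/

import Mathlib

open Matrix

/-- A symmetric matrix `A` is copositive if `xᵀ A x ≥ 0` for all entrywise nonnegative `x`. -/
def Copositive {n : ℕ} (A : Matrix (Fin n) (Fin n) ℝ) : Prop :=
  A.IsSymm ∧ ∀ x : Fin n → ℝ, (∀ i, 0 ≤ x i) → 0 ≤ x ⬝ᵥ A.mulVec x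

/-- The support of a vector. -/
def Supp {ι : Type*} (u : ι → ℝ) : Set ι := {i | u i ≠ 0}

/-- A zero of a copositive matrix: a nonzero nonnegative vector `u` with `uᵀ A u = 0`. -/
def IsZeroOf {n : ℕ} (A : Matrix (Fin n) (Fin n) ℝ) (u : Fin n → ℝ) : Prop :=
  u ≠ 0 ∧ (∀ i, 0 ≤ u i) ∧ u ⬝ᵥ A.mulVec u = 0

/-- A minimal zero: a zero such that no zero has support strictly contained in its support. -/
def IsMinimalZeroOf {n : ℕ} (A : Matrix (Fin n) (Fin n) ℝ) (u : Fin n → ℝ) : Prop :=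
  IsZeroOf A u ∧ ¬ ∃ v, IsZeroOf A v ∧ Supp v ⊂ Supp u

/-- The principal submatrix of `A` with rows and columns in `I`. -/
def subMat {n : ℕ} (A : Matrix (Fin n) (Fin n) ℝ) (I : Finset (Fin n)) :
    Matrix {i // i ∈ I} {i // i ∈ I} ℝ :=
  A.submatrix Subtype.val Subtype.val

/-- The subvector of `u` with indices in `I`. -/
def subVec {n : ℕ} (u : Fin n → ℝ) (I : Finset (Fin n)) : {i // i ∈ I} → ℝ :=
  fun i => u i.val

/-- Irreducibility of a copositive matrix `A` with respect to a set `M` of matrices. -/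
def IrreducibleWrtSet {n : ℕ} (A : Matrix (Fin n) (Fin n) ℝ)
    (M : Set (Matrix (Fin n) (Fin n) ℝ)) : Prop :=
  ¬ ∃ γ : ℝ, 0 < γ ∧ ∃ B ∈ M, B ≠ 0 ∧ Copositive (A - γ • B)

/-- Irreducibility of a copositive matrix `A` with respect to a single matrix `M`. -/
def IrreducibleWrtMat {n : ℕ} (A M : Matrix (Fin n) (Fin n) ℝ) : Prop :=
  ¬ ∃ γ : ℝ, 0 < γ ∧ Copositive (A - γ • M)

/-- An extremal element of a cone `K` of vectors. -/
def IsExtremalIn {ι : Type*} (K : Set (ι → ℝ)) (u : ι → ℝ) : Prop :=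
  u ∈ K ∧ u ≠ 0 ∧ ∀ v w, v ∈ K → w ∈ K → u = v + w →
    (∃ a : ℝ, 0 ≤ a ∧ v = a • u) ∧ (∃ b : ℝ, 0 ≤ b ∧ w = b • u)

/-- The matrix with entries 1 at positions `(i,j)` and `(j,i)` and 0 elsewhere. -/
def Eij {n : ℕ} (i j : Fin n) : Matrix (Fin n) (Fin n) ℝ :=
  fun a b => if (a = i ∧ b = j) ∨ (a = j ∧ b = i) then 1 else 0

lemma symm_dot {n : ℕ} {A : Matrix (Fin n) (Fin n) ℝ} (hs : A.IsSymm)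
    (x y : Fin n → ℝ) : x ⬝ᵥ A.mulVec y = y ⬝ᵥ A.mulVec x := by
  rw [Matrix.dotProduct_mulVec, ← Matrix.mulVec_transpose, hs, dotProduct_comm]

lemma quad_key {n : ℕ} {A : Matrix (Fin n) (Fin n) ℝ} (hA : Copositive A)
    {w : Fin n → ℝ} (hw : ∀ i, 0 ≤ w i) (hq : w ⬝ᵥ A.mulVec w = 0) (i : Fin n)
    (t : ℝ) (ht : 0 ≤ w i + t) :
    0 ≤ 2 * t * A.mulVec w i + t ^ 2 * A i i := by
  have h := hA.2 (w + t • (Pi.single i 1 : Fin n → ℝ)) ?_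
  · have e1 : w ⬝ᵥ A.mulVec (Pi.single i 1 : Fin n → ℝ) = A.mulVec w i := by
      rw [symm_dot hA.1, single_dotProduct, one_mul]
    have e2 : (Pi.single i 1 : Fin n → ℝ) ⬝ᵥ A.mulVec w = A.mulVec w i := by
      rw [single_dotProduct, one_mul]
    have e3 : (Pi.single i 1 : Fin n → ℝ) ⬝ᵥ A.mulVec (Pi.single i 1 : Fin n → ℝ) = A i i := by
      rw [single_dotProduct, one_mul, Matrix.mulVec_single]; simp
    rw [Matrix.mulVec_add, Matrix.mulVec_smul, dotProduct_add, add_dotProduct,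
        add_dotProduct, dotProduct_smul, dotProduct_smul, smul_dotProduct,
        smul_dotProduct, hq, e1, e2, e3] at h
    simp only [smul_eq_mul] at h
    nlinarith [h]
  · intro j
    by_cases hji : j = i
    · subst hji; simpa using ht
    · simp only [Pi.add_apply, Pi.smul_apply, Pi.single_apply, if_neg hji,
        smul_eq_mul, mul_zero, add_zero]
      exact hw j

lemma diag_nonneg {n : ℕ} {A : Matrix (Fin n) (Fin n) ℝ} (hA : Copositive A) (i : Fin n) :
    0 ≤ A i i := by
  have h := hA.2 (Pi.single i 1 : Fin n → ℝ) (by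
    intro j
    by_cases hji : j = i
    · subst hji; simp
    · simp [Pi.single_apply, hji])
  rwa [single_dotProduct, one_mul, Matrix.mulVec_single,
    show (MulOpposite.op (1:ℝ) • A.col i) i = A i i by simp] at h

lemma grad_nonneg {n : ℕ} {A : Matrix (Fin n) (Fin n) ℝ} (hA : Copositive A)
    {w : Fin n → ℝ} (hw : ∀ i, 0 ≤ w i) (hq : w ⬝ᵥ A.mulVec w = 0) (i : Fin n) :
    0 ≤ A.mulVec w i := by
  by_contra hc
  push_neg at hc
  set c := A.mulVec w i
  set d := A i i with hd'
  have hd : 0 ≤ d := diag_nonneg hA i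
  set t : ℝ := -c / (d + 1) with ht'
  have htpos : 0 < t := div_pos (by linarith) (by linarith)
  have h := quad_key hA hw hq i t (by have := hw i; linarith)
  have h2 : t * (d + 1) = -c := by
    rw [ht']; field_simp
  nlinarith [h, h2, htpos, mul_pos htpos htpos, hd]

lemma grad_zero {n : ℕ} {A : Matrix (Fin n) (Fin n) ℝ} (hA : Copositive A)
    {w : Fin n → ℝ} (hw : ∀ i, 0 ≤ w i) (hq : w ⬝ᵥ A.mulVec w = 0) (i : Fin n)
    (hwi : 0 < w i) : A.mulVec w i = 0 := by
  have hge := grad_nonneg hA hw hq i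
  rcases eq_or_lt_of_le hge with h | hc
  · exact h.symm
  exfalso
  set c := A.mulVec w i
  set d := A i i with hd'
  have hd : 0 ≤ d := diag_nonneg hA i
  set s : ℝ := min (w i) (c / (d + 1)) with hs'
  have hs : 0 < s := lt_min hwi (div_pos hc (by linarith))
  have h := quad_key hA hw hq i (-s) (by have := min_le_left (w i) (c / (d + 1)); linarith)
  have hsc : s * (d + 1) ≤ c := by
    have h2 : s ≤ c / (d + 1) := min_le_right _ _
    rw [le_div_iff₀ (by linarith)] at h2
    linarith
  nlinarith [h, mul_pos hs hc, sq_nonneg s, mul_le_mul_of_nonneg_left hsc hs.le]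

lemma sub_mulVec {n : ℕ} (A : Matrix (Fin n) (Fin n) ℝ) (I : Finset (Fin n))
    (v : Fin n → ℝ) (hv : ∀ i ∉ I, v i = 0) (j : {i // i ∈ I}) :
    (subMat A I).mulVec (subVec v I) j = A.mulVec v j.val := by
  unfold subMat subVec Matrix.mulVec dotProduct
  simp only [Matrix.submatrix_apply]
  rw [Finset.sum_coe_sort I (fun i => A j.val i * v i)]
  refine Finset.sum_subset (Finset.subset_univ I) ?_
  intro x _ hx
  rw [hv x hx, mul_zero]

theorem stmt1 {n : ℕ} (A : Matrix (Fin n) (Fin n) ℝ) (hA : Copositive A)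
    (u : Fin n → ℝ) (hu : IsZeroOf A u)
    (I : Finset (Fin n)) (hI : (I : Set (Fin n)) = Supp u)
    (K : Set ({i // i ∈ I} → ℝ))
    (hK : K = {x | (∀ i, 0 ≤ x i) ∧ (subMat A I).mulVec x = 0})
    (v : Fin n → ℝ) (hv0 : v ≠ 0) (hvI : Supp v ⊆ (I : Set (Fin n))) :
    IsZeroOf A v ↔ subVec v I ∈ K := by
  -- basic facts
  have huz : u ≠ 0 := hu.1
  have hun : ∀ i, 0 ≤ u i := hu.2.1
  have huq : u ⬝ᵥ A.mulVec u = 0 := hu.2.2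
  have hmemI : ∀ i : Fin n, i ∈ I ↔ u i ≠ 0 := by
    intro i
    constructor
    · intro h; have : i ∈ (I : Set (Fin n)) := h; rw [hI] at this; exact this
    · intro h; have : i ∈ Supp u := h; rw [← hI] at this; exact this
  have hupos : ∀ i ∈ I, 0 < u i := fun i hi =>
    lt_of_le_of_ne (hun i) (Ne.symm ((hmemI i).1 hi))
  have hvout : ∀ i ∉ I, v i = 0 := by
    intro i hi
    by_contra h
    exact hi (hvI h)
  subst hK
  constructor
  · rintro ⟨_, hvn, hvq⟩
    refine ⟨fun i => hvn i.val, ?_⟩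
    -- cross term is zero
    have hAu0 : ∀ i ∈ I, A.mulVec u i = 0 := fun i hi =>
      grad_zero hA hun huq i (hupos i hi)
    have hcross : v ⬝ᵥ A.mulVec u = 0 := by
      unfold dotProduct
      apply Finset.sum_eq_zero
      intro i _
      by_cases hvi : v i = 0
      · rw [hvi, zero_mul]
      · rw [hAu0 i (by simpa using hvI hvi), mul_zero]
    -- w = u + v is a zero with support ⊇ I
    have hwn : ∀ i, 0 ≤ u i + v i := fun i => add_nonneg (hun i) (hvn i)
    have hwq : (u + v) ⬝ᵥ A.mulVec (u + v) = 0 := by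
      rw [Matrix.mulVec_add, dotProduct_add, add_dotProduct, add_dotProduct, huq, hvq,
        symm_dot hA.1 u v, hcross]
      ring
    have hAw0 : ∀ i ∈ I, A.mulVec (u + v) i = 0 := by
      intro i hi
      exact grad_zero hA hwn hwq i (lt_of_lt_of_le (hupos i hi) (by have := hvn i; simp; linarith))
    have hAv0 : ∀ i ∈ I, A.mulVec v i = 0 := by
      intro i hi
      have h1 := hAw0 i hi
      rw [Matrix.mulVec_add, Pi.add_apply] at h1
      have := hAu0 i hi
      linarith
    funext j
    rw [sub_mulVec A I v hvout j, Pi.zero_apply]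
    exact hAv0 j.val j.property
  · rintro ⟨hvn, hAIv⟩
    have hvn' : ∀ i, 0 ≤ v i := by
      intro i
      by_cases hi : i ∈ I
      · exact hvn ⟨i, hi⟩
      · rw [hvout i hi]
    have hAv0 : ∀ i ∈ I, A.mulVec v i = 0 := by
      intro i hi
      have := congrFun hAIv ⟨i, hi⟩
      rwa [sub_mulVec A I v hvout ⟨i, hi⟩, Pi.zero_apply] at this
    refine ⟨hv0, hvn', ?_⟩
    unfold dotProduct
    apply Finset.sum_eq_zero
    intro i _
    by_cases hvi : v i = 0
    · rw [hvi, zero_mul]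
    · rw [hAv0 i (by simpa using hvI hvi), mul_zero]
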